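/- The lattice N(A_1^{24}) — generated by ℤ²⁴ together with the vectors y^c = (1/2)c for c in the Golay code, with bilinear form twice the standard inner product on ℝ²⁴ — is an even unimodular lattice of rank 24. -/
import Mathlib


/-- The generator matrix `[I₁₂ | A]` of the binary Golay code. -/
def golayGenMatrix : Matrix (Fin 12) (Fin 24) (ZMod 2) :=
  !![1, 0, 0, 0, 0, 0, 0, 0, 0, 0, 0, 0, 0, 0, 1, 1, 0, 0, 1, 1, 1, 1, 0, 1;
    0, 1, 0, 0, 0, 0, 0, 0, 0, 0, 0, 0, 1, 0, 0, 1, 1, 0, 0, 1, 1, 1, 1, 0;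
    0, 0, 1, 0, 0, 0, 0, 0, 0, 0, 0, 0, 1, 1, 0, 0, 1, 1, 0, 0, 0, 1, 1, 1;
    0, 0, 0, 1, 0, 0, 0, 0, 0, 0, 0, 0, 0, 1, 1, 0, 0, 1, 1, 0, 1, 0, 1, 1;
    0, 0, 0, 0, 1, 0, 0, 0, 0, 0, 0, 0, 0, 1, 1, 1, 1, 0, 0, 1, 0, 0, 1, 1;
    0, 0, 0, 0, 0, 1, 0, 0, 0, 0, 0, 0, 1, 0, 1, 1, 1, 1, 0, 0, 1, 0, 0, 1;
    0, 0, 0, 0, 0, 0, 1, 0, 0, 0, 0, 0, 1, 1, 0, 1, 0, 1, 1, 0, 1, 1, 0, 0;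
    0, 0, 0, 0, 0, 0, 0, 1, 0, 0, 0, 0, 1, 1, 1, 0, 0, 0, 1, 1, 0, 1, 1, 0;
    0, 0, 0, 0, 0, 0, 0, 0, 1, 0, 0, 0, 1, 0, 0, 1, 0, 1, 1, 1, 0, 0, 1, 1;
    0, 0, 0, 0, 0, 0, 0, 0, 0, 1, 0, 0, 1, 1, 0, 0, 1, 0, 1, 1, 1, 0, 0, 1;
    0, 0, 0, 0, 0, 0, 0, 0, 0, 0, 1, 0, 0, 1, 1, 0, 1, 1, 0, 1, 1, 1, 0, 0;
    0, 0, 0, 0, 0, 0, 0, 0, 0, 0, 0, 1, 0, 0, 1, 1, 1, 1, 1, 0, 0, 1, 1, 0]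

/-- The binary Golay code: the span of the rows of the generator matrix. -/
def golayCode : Submodule (ZMod 2) (Fin 24 → ZMod 2) :=
  Submodule.span (ZMod 2) (Set.range fun i : Fin 12 => golayGenMatrix i)

open Matrix Finset

abbrev fl (i : Fin 12) : Fin 24 := Fin.castAdd 12 i
abbrev fr (j : Fin 12) : Fin 24 := Fin.natAdd 12 j

lemma rows_orth : ∀ i j : Fin 12, golayGenMatrix i ⬝ᵥ golayGenMatrix j = 0 := by decide

lemma AtA : ∀ j j' : Fin 12,
    (∑ i, golayGenMatrix i (fr j) * golayGenMatrix i (fr j')) = if j = j' then 1 else 0 := by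
  decide

lemma idBlock : ∀ i i' : Fin 12,
    golayGenMatrix i (fl i') = if i' = i then 1 else 0 := by decide

lemma rows_wt : ∀ i : Fin 12, (4:ℤ) ∣ ∑ j, ((golayGenMatrix i j).val : ℤ) := by decide

lemma valsq : ∀ a : ZMod 2, ((a.val : ℤ)) * ((a.val : ℤ)) = (a.val : ℤ) := by decide

lemma val_add_int : ∀ a b : ZMod 2,
    (((a + b).val : ℤ)) = a.val + b.val - 2 * (a.val * b.val) := by decide

lemma castval (a : ZMod 2) : (((a.val : ℤ) : ZMod 2)) = a := by revert a; decide

lemma natval (a : ZMod 2) : ((a.val : ℕ) : ZMod 2) = a := by revert a; decide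

lemma zmod2cases : ∀ a : ZMod 2, a = 0 ∨ a = 1 := by decide

lemma rows_mem : ∀ i : Fin 12, golayGenMatrix i ∈ golayCode := fun i =>
  Submodule.subset_span ⟨i, rfl⟩

lemma code_orth_row : ∀ c ∈ golayCode, ∀ j, c ⬝ᵥ golayGenMatrix j = 0 := by
  intro c hc
  induction hc using Submodule.span_induction with
  | mem x h => obtain ⟨i, rfl⟩ := h; exact rows_orth i
  | zero => intro j; simp
  | add x y hx hy ihx ihy => intro j; simp [add_dotProduct, ihx j, ihy j]
  | smul a x hx ih => intro j; simp [smul_dotProduct, ih j]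

lemma code_orth : ∀ c ∈ golayCode, ∀ d ∈ golayCode, c ⬝ᵥ d = 0 := by
  intro c hc d hd
  induction hd using Submodule.span_induction with
  | mem x h => obtain ⟨j, rfl⟩ := h; exact code_orth_row c hc j
  | zero => simp
  | add x y hx hy ihx ihy => simp [dotProduct_add, ihx, ihy]
  | smul a x hx ih => simp [dotProduct_smul, ih]

lemma cast_sum_mul (c d : Fin 24 → ZMod 2) :
    ((∑ i, ((c i).val : ℤ) * ((d i).val : ℤ) : ℤ) : ZMod 2) = c ⬝ᵥ d := by
  rw [Int.cast_sum, dotProduct]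
  exact Finset.sum_congr rfl fun i _ => by rw [Int.cast_mul, castval, castval]

lemma code_dot_even {c d : Fin 24 → ZMod 2} (hc : c ∈ golayCode) (hd : d ∈ golayCode) :
    (2:ℤ) ∣ ∑ i, ((c i).val : ℤ) * ((d i).val : ℤ) := by
  have h0 : ((∑ i, ((c i).val : ℤ) * ((d i).val : ℤ) : ℤ) : ZMod 2) = 0 := by
    rw [cast_sum_mul]; exact code_orth c hc d hd
  exact_mod_cast (ZMod.intCast_zmod_eq_zero_iff_dvd _ 2).mp h0

lemma code_doubly_even : ∀ c ∈ golayCode, (4:ℤ) ∣ ∑ i, ((c i).val : ℤ) := by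
  intro c hc
  induction hc using Submodule.span_induction with
  | mem x h => obtain ⟨i, rfl⟩ := h; exact rows_wt i
  | zero => simp
  | add x y hx hy ihx ihy =>
    have hsum : (∑ i, (((x + y) i).val : ℤ)) =
        (∑ i, ((x i).val : ℤ)) + (∑ i, ((y i).val : ℤ))
          - 2 * ∑ i, ((x i).val : ℤ) * ((y i).val : ℤ) := by
      calc (∑ i, (((x + y) i).val : ℤ))
          = ∑ i, (((x i).val : ℤ) + ((y i).val : ℤ) - 2 * (((x i).val : ℤ) * ((y i).val : ℤ))) :=
            Finset.sum_congr rfl fun i _ => val_add_int (x i) (y i)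
        _ = _ := by rw [Finset.sum_sub_distrib, Finset.sum_add_distrib, Finset.mul_sum]
    obtain ⟨p, hp⟩ := ihx
    obtain ⟨q, hq⟩ := ihy
    obtain ⟨s, hs⟩ := code_dot_even hx hy
    exact ⟨p + q - s, by rw [hsum, hp, hq, hs]; ring⟩
  | smul a x hx ih =>
    rcases zmod2cases a with h | h <;> subst h <;> simpa using ih

lemma code_self_dual (y : Fin 24 → ZMod 2) (h : ∀ j, y ⬝ᵥ golayGenMatrix j = 0) :
    y ∈ golayCode := by
  set w : Fin 12 → (Fin 24 → ZMod 2) :=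
    fun j => ∑ i, golayGenMatrix i (fr j) • golayGenMatrix i with hw
  have hwmem : ∀ j, w j ∈ golayCode := fun j =>
    Submodule.sum_mem _ fun i _ => Submodule.smul_mem _ _ (rows_mem i)
  set z : Fin 24 → ZMod 2 := ∑ j, y (fr j) • w j with hz
  have hzmem : z ∈ golayCode := Submodule.sum_mem _ fun j _ => Submodule.smul_mem _ _ (hwmem j)
  have hwval : ∀ j m, w j m = ∑ i, golayGenMatrix i (fr j) * golayGenMatrix i m := by
    intro j m; rw [hw]; simp [Finset.sum_apply]
  have hzright : ∀ j', z (fr j') = y (fr j') := by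
    intro j'
    rw [hz]
    simp only [Finset.sum_apply, Pi.smul_apply, smul_eq_mul]
    calc (∑ j, y (fr j) * w j (fr j'))
        = ∑ j, y (fr j) * if j = j' then 1 else 0 := by
          refine Finset.sum_congr rfl fun j _ => ?_
          rw [hwval, AtA]
      _ = y (fr j') := by simp
  have key : ∀ i : Fin 12, (y - z) ⬝ᵥ golayGenMatrix i = 0 := by
    intro i
    rw [sub_dotProduct, h i, code_orth_row z hzmem i, sub_zero]
  have hleft : ∀ i : Fin 12, y (fl i) = z (fl i) := by
    intro i
    have hk := key i
    have hsplit : ((y - z) ⬝ᵥ golayGenMatrix i) =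
        (∑ i' : Fin 12, (y - z) (fl i') * golayGenMatrix i (fl i'))
        + ∑ j : Fin 12, (y - z) (fr j) * golayGenMatrix i (fr j) :=
      Fin.sum_univ_add (a := 12) (b := 12) (fun k => (y - z) k * golayGenMatrix i k)
    rw [hsplit] at hk
    have h2 : ∀ j : Fin 12, (y - z) (fr j) = 0 := by
      intro j; rw [Pi.sub_apply, hzright j, sub_self]
    have h3 : (∑ j : Fin 12, (y - z) (fr j) * golayGenMatrix i (fr j)) = 0 := by
      simp only [h2, zero_mul, Finset.sum_const_zero]
    rw [h3, add_zero] at hk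
    have h4 : (∑ i' : Fin 12, (y - z) (fl i') * golayGenMatrix i (fl i'))
        = (y - z) (fl i) := by
      calc (∑ i' : Fin 12, (y - z) (fl i') * golayGenMatrix i (fl i'))
          = ∑ i' : Fin 12, if i' = i then (y - z) (fl i') else 0 := by
            refine Finset.sum_congr rfl fun i' _ => ?_
            rw [idBlock]
            by_cases hii : i' = i <;> simp [hii]
        _ = (y - z) (fl i) := by simp
    rw [h4, Pi.sub_apply] at hk
    exact sub_eq_zero.mp hk
  have hyz : y = z := by
    funext m
    refine Fin.addCases (motive := fun m => y m = z m) (fun i => hleft i) (fun j => (hzright j).symm) m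
  rw [hyz]; exact hzmem

/-- The Niemeier lattice `N(A₁²⁴)`: the ℤ-span of `ℤ²⁴` together with the vectors
`yᶜ = (1/2)c` for `c` in the Golay code (codewords regarded as real 0-1 vectors). -/
def NA1 : Submodule ℤ (Fin 24 → ℝ) :=
  Submodule.span ℤ
    ({x : Fin 24 → ℝ | ∀ i, ∃ m : ℤ, x i = (m : ℝ)} ∪
      {y : Fin 24 → ℝ | ∃ c ∈ golayCode, y = fun i => ((c i).val : ℝ) / 2})

lemma mem_NA1_of (x : Fin 24 → ℝ) (k : Fin 24 → ℤ)
    (hxk : ∀ i, x i = (k i : ℝ) / 2)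
    (hk : (fun i => ((k i : ZMod 2))) ∈ golayCode) : x ∈ NA1 := by
  set c : Fin 24 → ZMod 2 := fun i => ((k i : ZMod 2)) with hc
  have hdvd : ∀ i, (2:ℤ) ∣ (k i - ((c i).val : ℤ)) := by
    intro i
    have h0 : ((k i - ((c i).val : ℤ) : ℤ) : ZMod 2) = 0 := by
      rw [Int.cast_sub, castval]
      simp [hc]
    exact_mod_cast (ZMod.intCast_zmod_eq_zero_iff_dvd _ 2).mp h0
  have ha : (fun i => x i - ((c i).val : ℝ) / 2) ∈
      {x : Fin 24 → ℝ | ∀ i, ∃ m : ℤ, x i = (m : ℝ)} := by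
    intro i
    obtain ⟨m, hm⟩ := hdvd i
    refine ⟨m, ?_⟩
    have h1 : (k i : ℝ) - (((c i).val : ℤ) : ℝ) = 2 * m := by exact_mod_cast congrArg (Int.cast : ℤ → ℝ) hm
    show x i - ((c i).val : ℝ) / 2 = (m : ℝ)
    rw [hxk i]
    push_cast at h1 ⊢
    linarith
  have hb : (fun i => ((c i).val : ℝ) / 2) ∈
      {y : Fin 24 → ℝ | ∃ c ∈ golayCode, y = fun i => ((c i).val : ℝ) / 2} := ⟨c, hk, rfl⟩
  have hx : x = (fun i => x i - ((c i).val : ℝ) / 2) + (fun i => ((c i).val : ℝ) / 2) := by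
    funext i; simp
  rw [hx]
  exact Submodule.add_mem _ (Submodule.subset_span (Or.inl ha))
    (Submodule.subset_span (Or.inr hb))

lemma exists_of_mem_NA1 {x : Fin 24 → ℝ} (hx : x ∈ NA1) :
    ∃ k : Fin 24 → ℤ, (∀ i, x i = (k i : ℝ) / 2) ∧
      (fun i => ((k i : ZMod 2))) ∈ golayCode := by
  induction hx using Submodule.span_induction with
  | mem v h =>
    rcases h with h | ⟨c, hc, rfl⟩
    · choose m hm using h
      refine ⟨fun i => 2 * m i, fun i => by rw [hm i]; push_cast; ring, ?_⟩
      have h0 : (fun i => (((2 * m i : ℤ)) : ZMod 2)) = (0 : Fin 24 → ZMod 2) := by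
        funext i; simp only [Pi.zero_apply]; push_cast; rw [show (2:ZMod 2) = 0 by decide]; ring
      rw [h0]; exact Submodule.zero_mem _
    · refine ⟨fun i => ((c i).val : ℤ), fun i => by push_cast; ring, ?_⟩
      have h0 : (fun i => ((((c i).val : ℤ) : ZMod 2))) = c := by
        funext i; exact castval _
      rw [h0]; exact hc
  | zero =>
    refine ⟨0, fun i => by simp, ?_⟩
    have h0 : (fun i : Fin 24 => (((0 : Fin 24 → ℤ) i : ℤ) : ZMod 2)) = (0 : Fin 24 → ZMod 2) := by
      funext i; simp
    rw [h0]; exact Submodule.zero_mem _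
  | add v u hv hu ihv ihu =>
    obtain ⟨k, hk1, hk2⟩ := ihv
    obtain ⟨l, hl1, hl2⟩ := ihu
    refine ⟨k + l, fun i => by simp only [Pi.add_apply, hk1 i, hl1 i]; push_cast; ring, ?_⟩
    have h0 : (fun i => (((k + l) i : ℤ) : ZMod 2)) =
        (fun i => ((k i : ZMod 2))) + (fun i => ((l i : ZMod 2))) := by
      funext i; simp only [Pi.add_apply]; push_cast; ring
    rw [h0]; exact Submodule.add_mem _ hk2 hl2
  | smul a v hv ih =>
    obtain ⟨k, hk1, hk2⟩ := ih
    refine ⟨a • k, fun i => ?_, ?_⟩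
    · simp only [Pi.smul_apply, smul_eq_mul, zsmul_eq_mul, hk1 i]
      push_cast; ring
    · have h0 : (fun i => (((a • k) i : ℤ) : ZMod 2)) =
          ((a : ZMod 2)) • (fun i => ((k i : ZMod 2))) := by
        funext i
        simp only [Pi.smul_apply, smul_eq_mul]
        push_cast; ring
      rw [h0]; exact Submodule.smul_mem _ _ hk2

/-- basis family for NA1: halved rows of the generator matrix followed by the
last 12 standard basis vectors -/
noncomputable def vfam : Fin 24 → (Fin 24 → ℝ) :=
  Fin.addCases (m := 12) (n := 12)
    (fun i => fun m => ((golayGenMatrix i m).val : ℝ) / 2)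
    (fun j => Pi.single (fr j) (1:ℝ))

lemma vfam_left (i : Fin 12) :
    vfam (fl i) = fun m => ((golayGenMatrix i m).val : ℝ) / 2 :=
  Fin.addCases_left i

lemma vfam_right (j : Fin 12) :
    vfam (fr j) = Pi.single (fr j) (1:ℝ) :=
  Fin.addCases_right j

lemma cast_ne_nat (i j : Fin 12) : fl i ≠ fr j := by
  intro h
  have h2 := congrArg Fin.val h
  simp only [Fin.coe_castAdd, Fin.coe_natAdd] at h2
  omega

lemma fr_inj (j j' : Fin 12) : fr j = fr j' ↔ j = j' := by
  constructor
  · intro h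
    have h2 := congrArg Fin.val h
    simp only [Fin.coe_natAdd] at h2
    exact Fin.ext (by omega)
  · intro h; rw [h]

lemma fl_inj (i i' : Fin 12) : fl i = fl i' ↔ i = i' := by
  constructor
  · intro h
    have h2 := congrArg Fin.val h
    simp only [Fin.coe_castAdd] at h2
    exact Fin.ext h2
  · intro h; rw [h]

lemma single_int_mem (m : Fin 24) :
    Pi.single m (1:ℝ) ∈ {x : Fin 24 → ℝ | ∀ i, ∃ n : ℤ, x i = (n : ℝ)} := by
  intro i
  rcases eq_or_ne i m with h | h
  · exact ⟨1, by subst h; simp⟩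
  · exact ⟨0, by simp [Pi.single_apply, h]⟩

lemma vfam_mem (k : Fin 24) : vfam k ∈ NA1 := by
  refine Fin.addCases (m := 12) (n := 12) (motive := fun k => vfam k ∈ NA1) ?_ ?_ k
  · intro i
    rw [vfam_left]
    exact Submodule.subset_span (Or.inr ⟨golayGenMatrix i, rows_mem i, rfl⟩)
  · intro j
    rw [vfam_right]
    exact Submodule.subset_span (Or.inl (single_int_mem _))

lemma single_eq_comb (i : Fin 12) :
    Pi.single (fl i) (1:ℝ) =
      (2:ℤ) • vfam (fl i)
        - ∑ j, ((golayGenMatrix i (fr j)).val : ℤ) • vfam (fr j) := by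
  funext m
  refine Fin.addCases (m := 12) (n := 12) (motive := fun m =>
    (Pi.single (fl i) (1:ℝ) : Fin 24 → ℝ) m =
    (((2:ℤ) • vfam (fl i)
      - ∑ j, ((golayGenMatrix i (fr j)).val : ℤ) • vfam (fr j)) : Fin 24 → ℝ) m) ?_ ?_ m
  · intro i'
    have h1 : ∀ j : Fin 12,
        (((golayGenMatrix i (fr j)).val : ℤ) • vfam (fr j)) (fl i') = 0 := by
      intro j
      rw [Pi.smul_apply, vfam_right, Pi.single_eq_of_ne (cast_ne_nat i' j), smul_zero]
    rw [Pi.sub_apply, Pi.smul_apply, Finset.sum_apply]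
    simp only [h1, Finset.sum_const_zero, sub_zero, vfam_left]
    rw [idBlock i i']
    rcases eq_or_ne i' i with hii | hii
    · subst hii
      rw [if_pos rfl, Pi.single_eq_same, zsmul_eq_mul, ZMod.val_one]
      norm_num
    · rw [if_neg hii, Pi.single_eq_of_ne (by rw [Ne, fl_inj]; exact hii), zsmul_eq_mul]
      norm_num
  · intro j'
    have h1 : ∀ j : Fin 12,
        (((golayGenMatrix i (fr j)).val : ℤ) • vfam (fr j)) (fr j')
          = if j = j' then ((golayGenMatrix i (fr j)).val : ℝ) else 0 := by
      intro j
      rcases eq_or_ne j j' with h | h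
      · subst h
        rw [if_pos rfl, Pi.smul_apply, vfam_right, Pi.single_eq_same, zsmul_eq_mul, mul_one]
        push_cast
        ring
      · rw [if_neg h, Pi.smul_apply, vfam_right,
          Pi.single_eq_of_ne (by rw [Ne, fr_inj]; exact Ne.symm h), smul_zero]
    rw [Pi.sub_apply, Pi.smul_apply, Finset.sum_apply]
    simp only [h1]
    rw [Finset.sum_ite_eq' Finset.univ j' (fun j => ((golayGenMatrix i (fr j)).val : ℝ)),
      if_pos (Finset.mem_univ _), Pi.single_eq_of_ne (Ne.symm (cast_ne_nat i j')),
      vfam_left, zsmul_eq_mul]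
    push_cast
    ring

lemma single_mem_vspan (m : Fin 24) :
    Pi.single m (1:ℝ) ∈ Submodule.span ℤ (Set.range vfam) := by
  refine Fin.addCases (m := 12) (n := 12)
    (motive := fun m => Pi.single m (1:ℝ) ∈ Submodule.span ℤ (Set.range vfam)) ?_ ?_ m
  · intro i
    rw [single_eq_comb i]
    exact Submodule.sub_mem _ (Submodule.smul_mem _ _ (Submodule.subset_span ⟨_, rfl⟩))
      (Submodule.sum_mem _ fun j _ => Submodule.smul_mem _ _ (Submodule.subset_span ⟨_, rfl⟩))
  · intro j
    rw [← vfam_right]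
    exact Submodule.subset_span ⟨_, rfl⟩

lemma intvec_mem_vspan (x : Fin 24 → ℝ) (hx : ∀ i, ∃ m : ℤ, x i = (m : ℝ)) :
    x ∈ Submodule.span ℤ (Set.range vfam) := by
  choose m hm using hx
  have hxs : x = ∑ k, m k • Pi.single k (1:ℝ) := by
    funext m'
    rw [Finset.sum_apply]
    have h1 : ∀ k, ((m k • Pi.single k (1:ℝ) : Fin 24 → ℝ)) m' = if m' = k then (m k : ℝ) else 0 := by
      intro k
      rcases eq_or_ne m' k with h | h
      · subst h
        rw [if_pos rfl, Pi.smul_apply, Pi.single_eq_same, zsmul_eq_mul, mul_one]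
      · rw [if_neg h, Pi.smul_apply, Pi.single_eq_of_ne h, smul_zero]
    simp only [h1]
    rw [Finset.sum_ite_eq Finset.univ m' (fun k => (m k : ℝ)), if_pos (Finset.mem_univ _), hm m']
  rw [hxs]
  exact Submodule.sum_mem _ fun k _ => Submodule.smul_mem _ _ (single_mem_vspan k)

lemma vfam_span_eq : Submodule.span ℤ (Set.range vfam) = NA1 := by
  apply le_antisymm
  · rw [Submodule.span_le]
    rintro _ ⟨k, rfl⟩
    exact vfam_mem k
  · rw [NA1, Submodule.span_le]
    rintro x (hx | ⟨c, hc, rfl⟩)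
    · exact intvec_mem_vspan x hx
    · obtain ⟨t, ht⟩ := (Submodule.mem_span_range_iff_exists_fun (ZMod 2)).mp hc
      set y : Fin 24 → ℝ := fun m => ((c m).val : ℝ) / 2 with hy
      set S : Fin 24 → ℝ := ∑ i, ((t i).val : ℤ) • vfam (fl i) with hS
      have hSval : ∀ m, S m = (∑ i, ((t i).val : ℝ) * ((golayGenMatrix i m).val : ℝ)) / 2 := by
        intro m
        rw [hS, Finset.sum_apply, Finset.sum_div]
        refine Finset.sum_congr rfl fun i _ => ?_
        rw [Pi.smul_apply, vfam_left, zsmul_eq_mul]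
        push_cast
        ring
      have hd : ∀ m, ∃ z : ℤ, (y - S) m = (z : ℝ) := by
        intro m
        have hcm : c m = ∑ i, t i * golayGenMatrix i m := by
          rw [← ht, Finset.sum_apply]
          exact Finset.sum_congr rfl fun i _ => rfl
        have hdvd : (2:ℤ) ∣ (((c m).val : ℤ) - ∑ i, ((t i).val : ℤ) * ((golayGenMatrix i m).val : ℤ)) := by
          have h0 : ((((c m).val : ℤ) - ∑ i, ((t i).val : ℤ) * ((golayGenMatrix i m).val : ℤ) : ℤ) : ZMod 2) = 0 := by
            rw [Int.cast_sub, castval, Int.cast_sum]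
            have h2 : ∀ i : Fin 12, ((((t i).val : ℤ) * ((golayGenMatrix i m).val : ℤ) : ℤ) : ZMod 2)
                = t i * golayGenMatrix i m := by
              intro i; rw [Int.cast_mul, castval, castval]
            rw [Finset.sum_congr rfl fun i _ => h2 i, hcm, sub_self]
          exact_mod_cast (ZMod.intCast_zmod_eq_zero_iff_dvd _ 2).mp h0
        obtain ⟨z, hz⟩ := hdvd
        refine ⟨z, ?_⟩
        have h3 : (((c m).val : ℝ)) - ∑ i, ((t i).val : ℝ) * ((golayGenMatrix i m).val : ℝ) = 2 * z := by
          exact_mod_cast congrArg (Int.cast : ℤ → ℝ) hz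
        rw [Pi.sub_apply, hSval m, hy]
        linarith
      have hys : y = S + (y - S) := by ring
      rw [hys]
      exact Submodule.add_mem _
        (Submodule.sum_mem _ fun i _ => Submodule.smul_mem _ _ (Submodule.subset_span ⟨_, rfl⟩))
        (intvec_mem_vspan _ hd)

lemma vfam_li : LinearIndependent ℤ vfam := by
  rw [Fintype.linearIndependent_iff]
  intro g hg
  have hleft : ∀ i : Fin 12, g (fl i) = 0 := by
    intro i
    have h0 := congrFun hg (fl i)
    rw [Finset.sum_apply, Pi.zero_apply] at h0
    have hsplit : (∑ k, (g k • vfam k) (fl i)) =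
        (∑ i' : Fin 12, (g (fl i') • vfam (fl i')) (fl i))
        + ∑ j : Fin 12, (g (fr j) • vfam (fr j)) (fl i) :=
      Fin.sum_univ_add (a := 12) (b := 12) (fun k => (g k • vfam k) (fl i))
    rw [hsplit] at h0
    have h2 : ∀ j : Fin 12, (g (fr j) • vfam (fr j)) (fl i) = 0 := by
      intro j
      rw [Pi.smul_apply, vfam_right, Pi.single_eq_of_ne (cast_ne_nat i j), smul_zero]
    have h3 : ∀ i' : Fin 12, (g (fl i') • vfam (fl i')) (fl i)
        = if i' = i then (g (fl i) : ℝ) / 2 else 0 := by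
      intro i'
      simp only [Pi.smul_apply, vfam_left]
      rw [idBlock i' i]
      rcases eq_or_ne i' i with h | h
      · subst h
        rw [if_pos rfl, if_pos rfl, ZMod.val_one, zsmul_eq_mul]
        push_cast; ring
      · rw [if_neg h, if_neg (Ne.symm h), ZMod.val_zero, zsmul_eq_mul]
        norm_num
    simp only [h2, h3, Finset.sum_const_zero, add_zero] at h0
    rw [Finset.sum_ite_eq' Finset.univ i (fun _ => (g (fl i) : ℝ) / 2),
      if_pos (Finset.mem_univ _)] at h0
    have : (g (fl i) : ℝ) = 0 := by linarith
    exact_mod_cast this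
  have hright : ∀ j : Fin 12, g (fr j) = 0 := by
    intro j
    have h0 := congrFun hg (fr j)
    rw [Finset.sum_apply, Pi.zero_apply] at h0
    have hsplit : (∑ k, (g k • vfam k) (fr j)) =
        (∑ i' : Fin 12, (g (fl i') • vfam (fl i')) (fr j))
        + ∑ j' : Fin 12, (g (fr j') • vfam (fr j')) (fr j) :=
      Fin.sum_univ_add (a := 12) (b := 12) (fun k => (g k • vfam k) (fr j))
    rw [hsplit] at h0
    have h2 : ∀ i' : Fin 12, (g (fl i') • vfam (fl i')) (fr j) = 0 := by
      intro i'
      rw [hleft i', zero_smul, Pi.zero_apply]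
    have h3 : ∀ j' : Fin 12, (g (fr j') • vfam (fr j')) (fr j)
        = if j' = j then (g (fr j) : ℝ) else 0 := by
      intro j'
      rcases eq_or_ne j' j with h | h
      · subst h
        rw [if_pos rfl, Pi.smul_apply, vfam_right, Pi.single_eq_same, zsmul_eq_mul, mul_one]
      · rw [if_neg h, Pi.smul_apply, vfam_right,
          Pi.single_eq_of_ne (by rw [Ne, fr_inj]; exact Ne.symm h), smul_zero]
    simp only [h2, h3, Finset.sum_const_zero, zero_add] at h0
    rw [Finset.sum_ite_eq' Finset.univ j (fun _ => (g (fr j) : ℝ)),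
      if_pos (Finset.mem_univ _)] at h0
    exact_mod_cast h0
  intro k
  exact Fin.addCases (m := 12) (n := 12) (motive := fun k => g k = 0) hleft hright k

lemma NA1_rank : Module.finrank ℤ NA1 = 24 := by
  have h := Module.finrank_eq_card_basis (Module.Basis.span vfam_li)
  rw [vfam_span_eq] at h
  simpa using h

/-- `N(A₁²⁴)`, with bilinear form twice the standard inner product on `ℝ²⁴`, is an even
unimodular lattice of rank 24. -/
theorem stmt12 :
    -- even
    (∀ x ∈ NA1, ∃ m : ℤ, 2 * ∑ i, x i * x i = 2 * (m : ℝ)) ∧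
    -- unimodular: the lattice equals its dual
    (∀ y : Fin 24 → ℝ,
      (∀ x ∈ NA1, ∃ m : ℤ, 2 * ∑ i, y i * x i = (m : ℝ)) ↔ y ∈ NA1) ∧
    -- rank 24
    Module.finrank ℤ NA1 = 24 := by
  refine ⟨?_, ?_, NA1_rank⟩
  · -- even
    intro x hx
    obtain ⟨k, hk, hkc⟩ := exists_of_mem_NA1 hx
    set c : Fin 24 → ZMod 2 := fun i => ((k i : ZMod 2)) with hc
    have hdvd : ∀ i, (2:ℤ) ∣ (k i - ((c i).val : ℤ)) := by
      intro i
      have h0 : ((k i - ((c i).val : ℤ) : ℤ) : ZMod 2) = 0 := by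
        rw [Int.cast_sub, castval]
        simp [hc]
      exact_mod_cast (ZMod.intCast_zmod_eq_zero_iff_dvd _ 2).mp h0
    choose s hs using hdvd
    have hki : ∀ i, k i = ((c i).val : ℤ) + 2 * s i := fun i => by linarith [hs i]
    have hsum : (∑ i, k i * k i) =
        (∑ i, ((c i).val : ℤ)) + 4 * ∑ i, (((c i).val : ℤ) * s i + s i * s i) := by
      rw [Finset.mul_sum, ← Finset.sum_add_distrib]
      refine Finset.sum_congr rfl fun i _ => ?_
      rw [hki i]
      nlinarith [valsq (c i)]
    obtain ⟨p, hp⟩ := code_doubly_even c hkc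
    have h4 : ((∑ i, k i * k i : ℤ) : ℝ) =
        4 * ((p + ∑ i, (((c i).val : ℤ) * s i + s i * s i) : ℤ) : ℝ) := by
      rw [hsum, hp]
      push_cast
      ring
    refine ⟨p + ∑ i, (((c i).val : ℤ) * s i + s i * s i), ?_⟩
    have hxx : (∑ i, x i * x i) = ((∑ i, k i * k i : ℤ) : ℝ) / 4 := by
      push_cast
      rw [Finset.sum_div]
      refine Finset.sum_congr rfl fun i _ => ?_
      rw [hk i]; ring
    rw [hxx, h4]
    ring
  · -- unimodular
    intro y
    constructor
    · intro hdual
      have hsingle : ∀ i : Fin 24, Pi.single i (1:ℝ) ∈ NA1 := fun i =>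
        Submodule.subset_span (Or.inl (single_int_mem i))
      have hk : ∀ i, ∃ n : ℤ, 2 * y i = (n : ℝ) := by
        intro i
        obtain ⟨n, hn⟩ := hdual (Pi.single i (1:ℝ)) (hsingle i)
        refine ⟨n, ?_⟩
        rw [← hn]
        congr 1
        have h1 : ∀ m, y m * (Pi.single i (1:ℝ) : Fin 24 → ℝ) m = if m = i then y i else 0 := by
          intro m
          rcases eq_or_ne m i with h | h
          · subst h; rw [if_pos rfl, Pi.single_eq_same, mul_one]
          · rw [if_neg h, Pi.single_eq_of_ne h, mul_zero]
        rw [Finset.sum_congr rfl fun m _ => h1 m,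
          Finset.sum_ite_eq' Finset.univ i (fun _ => y i), if_pos (Finset.mem_univ _)]
      choose k hk2 using hk
      have hyk : ∀ i, y i = (k i : ℝ) / 2 := fun i => by linarith [hk2 i]
      have hrowmem : ∀ j : Fin 12, (fun m => ((golayGenMatrix j m).val : ℝ) / 2) ∈ NA1 :=
        fun j => Submodule.subset_span (Or.inr ⟨golayGenMatrix j, rows_mem j, rfl⟩)
      have horth : ∀ j : Fin 12, (fun i => ((k i : ZMod 2))) ⬝ᵥ golayGenMatrix j = 0 := by
        intro j
        obtain ⟨n, hn⟩ := hdual _ (hrowmem j)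
        have hint : (∑ i, k i * ((golayGenMatrix j i).val : ℤ)) = 2 * n := by
          have hsum2 : (∑ i, y i * ((fun m => ((golayGenMatrix j m).val : ℝ)/2) i))
              = ((∑ i, k i * ((golayGenMatrix j i).val : ℤ) : ℤ) : ℝ) / 4 := by
            push_cast
            rw [Finset.sum_div]
            refine Finset.sum_congr rfl fun i _ => ?_
            rw [hyk i]; ring
          rw [hsum2] at hn
          have hr : ((∑ i, k i * ((golayGenMatrix j i).val : ℤ) : ℤ) : ℝ) = ((2 * n : ℤ) : ℝ) := by
            push_cast at hn ⊢
            linarith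
          exact_mod_cast hr
        have h0 : ((∑ i, k i * ((golayGenMatrix j i).val : ℤ) : ℤ) : ZMod 2) = 0 := by
          rw [hint]; push_cast; rw [show (2:ZMod 2) = 0 by decide]; ring
        rw [Int.cast_sum] at h0
        rw [dotProduct]
        rw [← h0]
        refine Finset.sum_congr rfl fun i _ => ?_
        rw [Int.cast_mul, castval]
      exact mem_NA1_of y k hyk (code_self_dual _ horth)
    · intro hy x hx
      obtain ⟨k, hk, hkc⟩ := exists_of_mem_NA1 hy
      obtain ⟨l, hl, hlc⟩ := exists_of_mem_NA1 hx
      have hdvd : (2:ℤ) ∣ ∑ i, k i * l i := by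
        have h0 : ((∑ i, k i * l i : ℤ) : ZMod 2) = 0 := by
          rw [Int.cast_sum]
          have h2 : ∀ i : Fin 24, ((k i * l i : ℤ) : ZMod 2) = (k i : ZMod 2) * (l i : ZMod 2) := by
            intro i; rw [Int.cast_mul]
          rw [Finset.sum_congr rfl fun i _ => h2 i]
          exact code_orth _ hkc _ hlc
        exact_mod_cast (ZMod.intCast_zmod_eq_zero_iff_dvd _ 2).mp h0
      obtain ⟨n, hn⟩ := hdvd
      refine ⟨n, ?_⟩
      have hr : (2:ℝ) * ∑ i, y i * x i = ((∑ i, k i * l i : ℤ) : ℝ) / 2 := by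
        push_cast
        rw [Finset.mul_sum, Finset.sum_div]
        refine Finset.sum_congr rfl fun i _ => ?_
        rw [hk i, hl i]; ring
      rw [hr, hn]
      push_cast
      ring
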